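/- Let (Ω, F, μ) be an atomless probability space, let S be a finite set, and for each x ∈ S let w_x ≥ 0 be a real number (a weight) and C_x ∈ F an event. For T ⊆ S write W_T = Σ_{x∈T} w_x and C_T = ⋃_{x∈T} C_x. Then the following are equivalent: (1) for every T ⊆ S, μ(C_T) ≥ W_T; (2) there exists a family {D_x}_{x∈S} of pairwise (a.e.) disjoint events with D_x ⊆ C_x and μ(D_x) = w_x for each x ∈ S. Moreover, if W_S = 1 then the D_x form a partition of Ω up to null measure. -/

import Mathlib

namespace Stmt18

open MeasureTheory Set

section Gale
open Finset

lemma gale {ι κ : Type*} [DecidableEq ι] [DecidableEq κ] (adj : ι → κ → Prop)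
    [∀ x B, Decidable (adj x B)] :
    ∀ (n : ℕ) (S : Finset ι) (P : Finset κ) (w : ι → ℝ) (s : κ → ℝ),
      S.card + (P.filter fun B => 0 < s B).card ≤ n →
      (∀ x, 0 ≤ w x) → (∀ B, 0 ≤ s B) →
      (∀ T, T ⊆ S → ∑ x ∈ T, w x ≤ ∑ B ∈ P.filter (fun B => ∃ x ∈ T, adj x B), s B) →
      ∃ d : ι → κ → ℝ, (∀ x B, 0 ≤ d x B) ∧
        (∀ x B, d x B ≠ 0 → x ∈ S ∧ B ∈ P ∧ adj x B) ∧
        (∀ x ∈ S, ∑ B ∈ P, d x B = w x) ∧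
        (∀ B ∈ P, ∑ x ∈ S, d x B ≤ s B) := by
  intro n
  induction n with
  | zero =>
    intro S P w s hn hw hs _
    have hS : S = ∅ := card_eq_zero.mp (Nat.le_zero.mp (le_trans (Nat.le_add_right _ _) hn))
    exact ⟨fun _ _ => 0, fun _ _ => le_rfl, fun x B h => (h rfl).elim, by simp [hS],
      fun B _ => by simpa using hs B⟩
  | succ n IH =>
    intro S P w s hn hw hs hall
    rcases eq_or_ne S ∅ with hS | hS
    · exact ⟨fun _ _ => 0, fun _ _ => le_rfl, fun x B h => (h rfl).elim, by simp [hS],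
        fun B _ => by simpa using hs B⟩
    obtain ⟨x0, hx0⟩ := Finset.nonempty_iff_ne_empty.mpr hS
    have hScard : 1 ≤ S.card := Finset.card_pos.mpr ⟨x0, hx0⟩
    by_cases hw0 : w x0 = 0
    · -- drop x0
      have hcard : (S.erase x0).card + (P.filter fun B => 0 < s B).card ≤ n := by
        rw [Finset.card_erase_of_mem hx0]; omega
      obtain ⟨d, hd0, hdsupp, hddem, hdsup⟩ := IH (S.erase x0) P w s hcard hw hs
        (fun T hT => hall T (hT.trans (erase_subset _ _)))
      have hd00 : ∀ B, d x0 B = 0 := by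
        intro B
        by_contra h
        exact (Finset.notMem_erase x0 S) (hdsupp x0 B h).1
      refine ⟨d, hd0, fun x B h => ⟨erase_subset _ _ (hdsupp x B h).1, (hdsupp x B h).2.1,
        (hdsupp x B h).2.2⟩, ?_, ?_⟩
      · intro x hx
        by_cases hxx : x = x0
        · rw [hxx, hw0]
          exact Finset.sum_eq_zero fun B _ => hd00 B
        · exact hddem x (mem_erase.mpr ⟨hxx, hx⟩)
      · intro B hB
        rw [← Finset.add_sum_erase S (fun x => d x B) hx0, hd00 B, zero_add]
        exact hdsup B hB
    · have hw0' : 0 < w x0 := (hw x0).lt_of_ne (Ne.symm hw0)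
      -- find a positive supply adjacent to x0
      have h1 : w x0 ≤ ∑ B ∈ P.filter (fun B => ∃ x ∈ ({x0} : Finset ι), adj x B), s B := by
        simpa using hall {x0} (singleton_subset_iff.mpr hx0)
      have hex : ∃ B0 ∈ P.filter (fun B => ∃ x ∈ ({x0} : Finset ι), adj x B), 0 < s B0 := by
        by_contra h
        push_neg at h
        have : ∑ B ∈ P.filter (fun B => ∃ x ∈ ({x0} : Finset ι), adj x B), s B ≤ 0 :=
          Finset.sum_nonpos fun B hB => (h B hB)
        linarith
      obtain ⟨B0, hB0mem, hsB0⟩ := hex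
      have hB0P : B0 ∈ P := (mem_filter.mp hB0mem).1
      have hadj0 : adj x0 B0 := by
        have h2 := (mem_filter.mp hB0mem).2
        simpa using h2
      set Ts := S.powerset.filter (fun T => x0 ∉ T ∧ ∃ x ∈ T, adj x B0) with hTs
      by_cases htight : ∃ T ∈ Ts,
          (∑ B ∈ P.filter (fun B => ∃ x ∈ T, adj x B), s B) - ∑ x ∈ T, w x
            < min (w x0) (s B0)
      · -- a tight set appears after reducing by ε: split along it
        obtain ⟨T1, hT1, hT1s⟩ := htight
        obtain ⟨T0, hT0Ts, hT0min⟩ := Finset.exists_min_image Ts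
          (fun T => (∑ B ∈ P.filter (fun B => ∃ x ∈ T, adj x B), s B) - ∑ x ∈ T, w x)
          ⟨T1, hT1⟩
        have hT0sub : T0 ⊆ S := mem_powerset.mp (mem_filter.mp hT0Ts).1
        have hx0T0 : x0 ∉ T0 := (mem_filter.mp hT0Ts).2.1
        have hB0T0 : ∃ x ∈ T0, adj x B0 := (mem_filter.mp hT0Ts).2.2
        have hT0ne : T0.Nonempty := by
          obtain ⟨x, hx, _⟩ := hB0T0; exact ⟨x, hx⟩
        set ε := (∑ B ∈ P.filter (fun B => ∃ x ∈ T0, adj x B), s B) - ∑ x ∈ T0, w x with hε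
        have hε0 : 0 ≤ ε := sub_nonneg.mpr (hall T0 hT0sub)
        have hεm : ε < min (w x0) (s B0) := lt_of_le_of_lt (hT0min T1 hT1) hT1s
        have hεw : ε ≤ w x0 := le_of_lt (lt_of_lt_of_le hεm (min_le_left _ _))
        have hεs : ε ≤ s B0 := le_of_lt (lt_of_lt_of_le hεm (min_le_right _ _))
        set w' := fun x => w x - if x = x0 then ε else 0 with hw'
        set s' := fun B => s B - if B = B0 then ε else 0 with hs'
        have hsumw' : ∀ T : Finset ι,
            ∑ x ∈ T, w' x = (∑ x ∈ T, w x) - (if x0 ∈ T then ε else 0) := by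
          intro T
          simp only [hw']
          rw [Finset.sum_sub_distrib, Finset.sum_ite_eq' T x0 (fun _ => ε)]
        have hsums' : ∀ Q : Finset κ,
            ∑ B ∈ Q, s' B = (∑ B ∈ Q, s B) - (if B0 ∈ Q then ε else 0) := by
          intro Q
          simp only [hs']
          rw [Finset.sum_sub_distrib, Finset.sum_ite_eq' Q B0 (fun _ => ε)]
        have hw'0 : ∀ x, 0 ≤ w' x := by
          intro x
          simp only [hw']
          by_cases h : x = x0
          · rw [if_pos h, h]; linarith
          · rw [if_neg h]; linarith [hw x]
        have hs'0 : ∀ B, 0 ≤ s' B := by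
          intro B
          simp only [hs']
          by_cases h : B = B0
          · rw [if_pos h, h]; linarith
          · rw [if_neg h]; linarith [hs B]
        have hs'le : ∀ B, s' B ≤ s B := by
          intro B; simp only [hs']
          by_cases h : B = B0
          · rw [if_pos h]; linarith
          · rw [if_neg h]; linarith
        -- new Hall condition
        have hhall' : ∀ T, T ⊆ S →
            ∑ x ∈ T, w' x ≤ ∑ B ∈ P.filter (fun B => ∃ x ∈ T, adj x B), s' B := by
          intro T hT
          rw [hsumw', hsums']
          by_cases hx0T : x0 ∈ T
          · have hB0NT : B0 ∈ P.filter (fun B => ∃ x ∈ T, adj x B) :=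
              mem_filter.mpr ⟨hB0P, ⟨x0, hx0T, hadj0⟩⟩
            rw [if_pos hx0T, if_pos hB0NT]
            linarith [hall T hT]
          · rw [if_neg hx0T]
            by_cases hB0NT : B0 ∈ P.filter (fun B => ∃ x ∈ T, adj x B)
            · rw [if_pos hB0NT]
              have hTTs : T ∈ Ts := by
                rw [hTs]
                exact mem_filter.mpr ⟨mem_powerset.mpr hT, hx0T, (mem_filter.mp hB0NT).2⟩
              have h4 := hT0min T hTTs
              linarith
            · rw [if_neg hB0NT]
              linarith [hall T hT]
        -- tightness of T0 in the new instance
        have hB0NT0 : B0 ∈ P.filter (fun B => ∃ x ∈ T0, adj x B) :=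
          mem_filter.mpr ⟨hB0P, hB0T0⟩
        have htight0 : ∑ x ∈ T0, w' x
            = ∑ B ∈ P.filter (fun B => ∃ x ∈ T0, adj x B), s' B := by
          rw [hsumw', hsums', if_neg hx0T0, if_pos hB0NT0]
          linarith
        -- first recursive call on (T0, N T0)
        have hcard1 : T0.card + ((P.filter (fun B => ∃ x ∈ T0, adj x B)).filter
            fun B => 0 < s' B).card ≤ n := by
          have h1' : T0.card < S.card :=
            Finset.card_lt_card ((Finset.ssubset_iff_of_subset hT0sub).mpr ⟨x0, hx0, hx0T0⟩)
          have h2' : ((P.filter (fun B => ∃ x ∈ T0, adj x B)).filter fun B => 0 < s' B)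
              ⊆ P.filter fun B => 0 < s B := by
            intro B hB
            obtain ⟨hBa, hBb⟩ := mem_filter.mp hB
            exact mem_filter.mpr ⟨(mem_filter.mp hBa).1, lt_of_lt_of_le hBb (hs'le B)⟩
          have h3' := Finset.card_le_card h2'
          omega
        have hhall1 : ∀ R, R ⊆ T0 → ∑ x ∈ R, w' x ≤
            ∑ B ∈ (P.filter (fun B => ∃ x ∈ T0, adj x B)).filter
              (fun B => ∃ x ∈ R, adj x B), s' B := by
          intro R hR
          have hset : (P.filter (fun B => ∃ x ∈ T0, adj x B)).filter
              (fun B => ∃ x ∈ R, adj x B) = P.filter (fun B => ∃ x ∈ R, adj x B) := by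
            ext B
            simp only [mem_filter, and_assoc]
            constructor
            · rintro ⟨h1', _, h3'⟩; exact ⟨h1', h3'⟩
            · rintro ⟨h1', x, hx, ha⟩
              exact ⟨h1', ⟨x, hR hx, ha⟩, ⟨x, hx, ha⟩⟩
          rw [hset]
          exact hhall' R (hR.trans hT0sub)
        obtain ⟨d1, hd10, hd1supp, hd1dem, hd1sup⟩ :=
          IH T0 (P.filter (fun B => ∃ x ∈ T0, adj x B)) w' s' hcard1 hw'0 hs'0 hhall1
        -- second recursive call on (S \ T0, P \ N T0)
        have hcard2 : (S \ T0).card + ((P \ P.filter (fun B => ∃ x ∈ T0, adj x B)).filter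
            fun B => 0 < s' B).card ≤ n := by
          have ha' := Finset.card_sdiff_of_subset hT0sub
          have hb' := Finset.card_pos.mpr hT0ne
          have hc' := Finset.card_le_card hT0sub
          have h2' : ((P \ P.filter (fun B => ∃ x ∈ T0, adj x B)).filter fun B => 0 < s' B)
              ⊆ P.filter fun B => 0 < s B := by
            intro B hB
            obtain ⟨hBa, hBb⟩ := mem_filter.mp hB
            exact mem_filter.mpr ⟨(mem_sdiff.mp hBa).1, lt_of_lt_of_le hBb (hs'le B)⟩
          have h3' := Finset.card_le_card h2'
          omega
        have hhall2 : ∀ R, R ⊆ S \ T0 → ∑ x ∈ R, w' x ≤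
            ∑ B ∈ (P \ P.filter (fun B => ∃ x ∈ T0, adj x B)).filter
              (fun B => ∃ x ∈ R, adj x B), s' B := by
          intro R hR
          have hRS : R ⊆ S := hR.trans sdiff_subset
          have hRT0 : Disjoint R T0 := by
            refine Finset.disjoint_left.mpr fun x hx hx' => ?_
            exact (mem_sdiff.mp (hR hx)).2 hx'
          have hNsub : P.filter (fun B => ∃ x ∈ T0, adj x B)
              ⊆ P.filter (fun B => ∃ x ∈ R ∪ T0, adj x B) := by
            intro B hB
            obtain ⟨hB1, x, hx, ha⟩ := mem_filter.mp hB
            exact mem_filter.mpr ⟨hB1, x, mem_union_right _ hx, ha⟩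
          have hset : (P \ P.filter (fun B => ∃ x ∈ T0, adj x B)).filter
              (fun B => ∃ x ∈ R, adj x B)
              = P.filter (fun B => ∃ x ∈ R ∪ T0, adj x B)
                \ P.filter (fun B => ∃ x ∈ T0, adj x B) := by
            ext B
            constructor
            · intro hB
              obtain ⟨hB1, x, hx, ha⟩ := mem_filter.mp hB
              obtain ⟨hB2, hB3⟩ := mem_sdiff.mp hB1
              exact mem_sdiff.mpr ⟨mem_filter.mpr ⟨hB2, x, mem_union_left _ hx, ha⟩, hB3⟩
            · intro hB
              obtain ⟨hB1, hB3⟩ := mem_sdiff.mp hB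
              obtain ⟨hB2, x, hx, ha⟩ := mem_filter.mp hB1
              rcases mem_union.mp hx with hx' | hx'
              · exact mem_filter.mpr ⟨mem_sdiff.mpr ⟨hB2, hB3⟩, x, hx', ha⟩
              · exact absurd (mem_filter.mpr ⟨hB2, x, hx', ha⟩) hB3
          rw [hset, Finset.sum_sdiff_eq_sub hNsub]
          have hsum : ∑ x ∈ R ∪ T0, w' x = ∑ x ∈ R, w' x + ∑ x ∈ T0, w' x :=
            Finset.sum_union hRT0
          have h5' := hhall' (R ∪ T0) (Finset.union_subset hRS hT0sub)
          rw [hsum, htight0] at h5'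
          linarith
        obtain ⟨d2, hd20, hd2supp, hd2dem, hd2sup⟩ :=
          IH (S \ T0) (P \ P.filter (fun B => ∃ x ∈ T0, adj x B)) w' s' hcard2 hw'0 hs'0 hhall2
        -- combine
        refine ⟨fun x B => d1 x B + d2 x B + (if x = x0 ∧ B = B0 then ε else 0),
          ?_, ?_, ?_, ?_⟩
        · intro x B
          have h3 : (0:ℝ) ≤ if x = x0 ∧ B = B0 then ε else 0 := by
            split
            · exact hε0
            · exact le_rfl
          dsimp only
          linarith [hd10 x B, hd20 x B]
        · intro x B h
          dsimp only at h
          by_cases h1' : d1 x B ≠ 0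
          · obtain ⟨ha, hb, hc⟩ := hd1supp x B h1'
            exact ⟨hT0sub ha, (mem_filter.mp hb).1, hc⟩
          by_cases h2' : d2 x B ≠ 0
          · obtain ⟨ha, hb, hc⟩ := hd2supp x B h2'
            exact ⟨(mem_sdiff.mp ha).1, (mem_sdiff.mp hb).1, hc⟩
          push_neg at h1' h2'
          rw [h1', h2'] at h
          simp only [zero_add, add_zero] at h
          by_cases hx' : x = x0 ∧ B = B0
          · obtain ⟨hxa, hxb⟩ := hx'
            exact ⟨by rw [hxa]; exact hx0, by rw [hxb]; exact hB0P,
              by rw [hxa, hxb]; exact hadj0⟩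
          · rw [if_neg hx'] at h; exact (h rfl).elim
        · intro x hx
          rw [Finset.sum_add_distrib, Finset.sum_add_distrib]
          by_cases hxT0 : x ∈ T0
          · have hxx0 : x ≠ x0 := fun h => hx0T0 (h ▸ hxT0)
            have e1 : ∑ B ∈ P, d1 x B
                = ∑ B ∈ P.filter (fun B => ∃ x ∈ T0, adj x B), d1 x B := by
              refine (Finset.sum_subset (filter_subset _ _) fun B hB hB' => ?_).symm
              by_contra h
              exact hB' (hd1supp x B h).2.1
            have e2 : ∑ B ∈ P, d2 x B = 0 := by
              refine Finset.sum_eq_zero fun B _ => ?_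
              by_contra h
              exact (mem_sdiff.mp (hd2supp x B h).1).2 hxT0
            have e3 : ∑ B ∈ P, (if x = x0 ∧ B = B0 then ε else 0) = 0 := by
              refine Finset.sum_eq_zero fun B _ => ?_
              simp [hxx0]
            rw [e1, e2, e3, hd1dem x hxT0, add_zero, add_zero]
            simp only [hw']
            rw [if_neg hxx0]
            ring
          · have hxS : x ∈ S \ T0 := mem_sdiff.mpr ⟨hx, hxT0⟩
            have e1 : ∑ B ∈ P, d1 x B = 0 := by
              refine Finset.sum_eq_zero fun B _ => ?_
              by_contra h
              exact hxT0 (hd1supp x B h).1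
            have e2 : ∑ B ∈ P, d2 x B
                = ∑ B ∈ P \ P.filter (fun B => ∃ x ∈ T0, adj x B), d2 x B := by
              refine (Finset.sum_subset sdiff_subset fun B hB hB' => ?_).symm
              by_contra h
              exact hB' (hd2supp x B h).2.1
            have e3 : ∑ B ∈ P, (if x = x0 ∧ B = B0 then ε else 0)
                = if x = x0 then ε else 0 := by
              by_cases hxx0 : x = x0
              · simp [hxx0, Finset.sum_ite_eq', hB0P]
              · simp [hxx0]
            rw [e1, e2, e3, hd2dem x hxS, zero_add]
            simp only [hw']
            by_cases hxx0 : x = x0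
            · rw [if_pos hxx0]; ring
            · rw [if_neg hxx0]; ring
        · intro B hB
          rw [Finset.sum_add_distrib, Finset.sum_add_distrib]
          have e3 : ∑ x ∈ S, (if x = x0 ∧ B = B0 then ε else 0)
              = if B = B0 then ε else 0 := by
            by_cases hBB0 : B = B0
            · simp [hBB0, Finset.sum_ite_eq', hx0]
            · simp [hBB0]
          rw [e3]
          by_cases hBN : B ∈ P.filter (fun B => ∃ x ∈ T0, adj x B)
          · have e1 : ∑ x ∈ S, d1 x B = ∑ x ∈ T0, d1 x B := by
              refine (Finset.sum_subset hT0sub fun x hx hx' => ?_).symm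
              by_contra h
              exact hx' (hd1supp x B h).1
            have e2 : ∑ x ∈ S, d2 x B = 0 := by
              refine Finset.sum_eq_zero fun x _ => ?_
              by_contra h
              exact (mem_sdiff.mp (hd2supp x B h).2.1).2 hBN
            rw [e1, e2, add_zero]
            have h6 := hd1sup B hBN
            simp only [hs'] at h6
            by_cases hBB0 : B = B0
            · rw [if_pos hBB0]
              rw [if_pos hBB0] at h6
              have : s B - ε + ε = s B := by ring
              calc ∑ x ∈ T0, d1 x B + ε ≤ (s B - ε) + ε := by linarith
                _ = s B := by ring
            · rw [if_neg hBB0]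
              rw [if_neg hBB0] at h6
              linarith
          · have hBsd : B ∈ P \ P.filter (fun B => ∃ x ∈ T0, adj x B) :=
              mem_sdiff.mpr ⟨hB, hBN⟩
            have e1 : ∑ x ∈ S, d1 x B = 0 := by
              refine Finset.sum_eq_zero fun x _ => ?_
              by_contra h
              exact hBN (hd1supp x B h).2.1
            have e2 : ∑ x ∈ S, d2 x B = ∑ x ∈ S \ T0, d2 x B := by
              refine (Finset.sum_subset sdiff_subset fun x hx hx' => ?_).symm
              by_contra h
              exact hx' (hd2supp x B h).1
            have hBB0 : B ≠ B0 := fun h => hBN (h ▸ hB0NT0)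
            rw [e1, e2, zero_add, if_neg hBB0, add_zero]
            have h6 := hd2sup B hBsd
            simp only [hs', if_neg hBB0] at h6
            linarith
      · -- no tight set within reach
        push_neg at htight
        by_cases hms : w x0 ≤ s B0
        · -- assign all of w x0 to B0, then drop x0
          set s' := fun B => s B - if B = B0 then w x0 else 0 with hs'
          have hs'0 : ∀ B, 0 ≤ s' B := by
            intro B; simp only [hs']
            by_cases h : B = B0
            · rw [if_pos h, h]; linarith
            · rw [if_neg h]; linarith [hs B]
          have hs'le : ∀ B, s' B ≤ s B := by
            intro B; simp only [hs']
            by_cases h : B = B0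
            · rw [if_pos h]; linarith
            · rw [if_neg h]; linarith
          have hsums' : ∀ Q : Finset κ,
              ∑ B ∈ Q, s' B = (∑ B ∈ Q, s B) - (if B0 ∈ Q then w x0 else 0) := by
            intro Q
            simp only [hs']
            rw [Finset.sum_sub_distrib, Finset.sum_ite_eq' Q B0 (fun _ => w x0)]
          have hcard : (S.erase x0).card + (P.filter fun B => 0 < s' B).card ≤ n := by
            rw [Finset.card_erase_of_mem hx0]
            have h2' : (P.filter fun B => 0 < s' B) ⊆ P.filter fun B => 0 < s B := by
              intro B hB
              obtain ⟨hBa, hBb⟩ := mem_filter.mp hB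
              exact mem_filter.mpr ⟨hBa, lt_of_lt_of_le hBb (hs'le B)⟩
            have h3' := Finset.card_le_card h2'
            omega
          have hhall' : ∀ T, T ⊆ S.erase x0 →
              ∑ x ∈ T, w x ≤ ∑ B ∈ P.filter (fun B => ∃ x ∈ T, adj x B), s' B := by
            intro T hT
            have hTS : T ⊆ S := hT.trans (erase_subset _ _)
            have hx0T : x0 ∉ T := fun h => Finset.notMem_erase x0 S (hT h)
            rw [hsums']
            by_cases hB0NT : B0 ∈ P.filter (fun B => ∃ x ∈ T, adj x B)
            · rw [if_pos hB0NT]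
              have hTTs : T ∈ Ts := by
                rw [hTs]
                exact mem_filter.mpr ⟨mem_powerset.mpr hTS, hx0T, (mem_filter.mp hB0NT).2⟩
              have h4 := htight T hTTs
              have h5 : min (w x0) (s B0) = w x0 := min_eq_left hms
              linarith
            · rw [if_neg hB0NT]
              linarith [hall T hTS]
          obtain ⟨d', hd0', hdsupp', hddem', hdsup'⟩ :=
            IH (S.erase x0) P w s' hcard hw hs'0 hhall'
          refine ⟨fun x B => d' x B + (if x = x0 ∧ B = B0 then w x0 else 0), ?_, ?_, ?_, ?_⟩
          · intro x B
            have h3 : (0:ℝ) ≤ if x = x0 ∧ B = B0 then w x0 else 0 := by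
              split
              · exact le_of_lt hw0'
              · exact le_rfl
            dsimp only
            linarith [hd0' x B]
          · intro x B h
            dsimp only at h
            by_cases h1' : d' x B ≠ 0
            · obtain ⟨ha, hb, hc⟩ := hdsupp' x B h1'
              exact ⟨erase_subset _ _ ha, hb, hc⟩
            push_neg at h1'
            rw [h1', zero_add] at h
            by_cases hx' : x = x0 ∧ B = B0
            · obtain ⟨hxa, hxb⟩ := hx'
              exact ⟨by rw [hxa]; exact hx0, by rw [hxb]; exact hB0P,
                by rw [hxa, hxb]; exact hadj0⟩
            · rw [if_neg hx'] at h; exact (h rfl).elim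
          · intro x hx
            rw [Finset.sum_add_distrib]
            by_cases hxx0 : x = x0
            · have e1 : ∑ B ∈ P, d' x B = 0 := by
                refine Finset.sum_eq_zero fun B _ => ?_
                by_contra h
                rw [hxx0] at h
                exact Finset.notMem_erase x0 S (hdsupp' x0 B h).1
              have e3 : ∑ B ∈ P, (if x = x0 ∧ B = B0 then w x0 else 0) = w x0 := by
                simp [hxx0, Finset.sum_ite_eq', hB0P]
              rw [e1, e3, zero_add, hxx0]
            · have e3 : ∑ B ∈ P, (if x = x0 ∧ B = B0 then w x0 else 0) = 0 := by
                refine Finset.sum_eq_zero fun B _ => ?_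
                simp [hxx0]
              rw [e3, add_zero]
              exact hddem' x (mem_erase.mpr ⟨hxx0, hx⟩)
          · intro B hB
            rw [Finset.sum_add_distrib]
            have e1 : ∑ x ∈ S, d' x B = ∑ x ∈ S.erase x0, d' x B := by
              refine (Finset.sum_subset (erase_subset _ _) fun x hx hx' => ?_).symm
              by_contra h
              exact hx' (hdsupp' x B h).1
            have e3 : ∑ x ∈ S, (if x = x0 ∧ B = B0 then w x0 else 0)
                = if B = B0 then w x0 else 0 := by
              by_cases hBB0 : B = B0
              · simp [hBB0, Finset.sum_ite_eq', hx0]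
              · simp [hBB0]
            rw [e1, e3]
            have h6 := hdsup' B hB
            simp only [hs'] at h6
            by_cases hBB0 : B = B0
            · rw [if_pos hBB0]
              rw [if_pos hBB0] at h6
              linarith
            · rw [if_neg hBB0]
              rw [if_neg hBB0] at h6
              linarith
        · -- use up B0's supply
          have hsm : s B0 < w x0 := lt_of_not_ge hms
          set w' := fun x => w x - if x = x0 then s B0 else 0 with hw'
          set s' := fun B => s B - if B = B0 then s B0 else 0 with hs'
          have hw'0 : ∀ x, 0 ≤ w' x := by
            intro x; simp only [hw']
            by_cases h : x = x0
            · rw [if_pos h, h]; linarith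
            · rw [if_neg h]; linarith [hw x]
          have hs'0 : ∀ B, 0 ≤ s' B := by
            intro B; simp only [hs']
            by_cases h : B = B0
            · rw [if_pos h, h]; linarith
            · rw [if_neg h]; linarith [hs B]
          have hsumw' : ∀ T : Finset ι,
              ∑ x ∈ T, w' x = (∑ x ∈ T, w x) - (if x0 ∈ T then s B0 else 0) := by
            intro T
            simp only [hw']
            rw [Finset.sum_sub_distrib, Finset.sum_ite_eq' T x0 (fun _ => s B0)]
          have hsums' : ∀ Q : Finset κ,
              ∑ B ∈ Q, s' B = (∑ B ∈ Q, s B) - (if B0 ∈ Q then s B0 else 0) := by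
            intro Q
            simp only [hs']
            rw [Finset.sum_sub_distrib, Finset.sum_ite_eq' Q B0 (fun _ => s B0)]
          have hcard : S.card + (P.filter fun B => 0 < s' B).card ≤ n := by
            have hB0pos : B0 ∈ P.filter fun B => 0 < s B := mem_filter.mpr ⟨hB0P, hsB0⟩
            have h2' : (P.filter fun B => 0 < s' B)
                ⊆ (P.filter fun B => 0 < s B).erase B0 := by
              intro B hB
              obtain ⟨hBa, hBb⟩ := mem_filter.mp hB
              have hBB0 : B ≠ B0 := by
                intro h
                rw [h] at hBb
                simp only [hs', eq_self_iff_true, if_true] at hBb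
                linarith
              have hsB : s' B = s B := by simp only [hs', if_neg hBB0]; ring
              rw [hsB] at hBb
              exact mem_erase.mpr ⟨hBB0, mem_filter.mpr ⟨hBa, hBb⟩⟩
            have h3' := Finset.card_le_card h2'
            rw [Finset.card_erase_of_mem hB0pos] at h3'
            have h4' : 1 ≤ (P.filter fun B => 0 < s B).card :=
              Finset.card_pos.mpr ⟨B0, hB0pos⟩
            omega
          have hhall' : ∀ T, T ⊆ S →
              ∑ x ∈ T, w' x ≤ ∑ B ∈ P.filter (fun B => ∃ x ∈ T, adj x B), s' B := by
            intro T hT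
            rw [hsumw', hsums']
            by_cases hx0T : x0 ∈ T
            · have hB0NT : B0 ∈ P.filter (fun B => ∃ x ∈ T, adj x B) :=
                mem_filter.mpr ⟨hB0P, ⟨x0, hx0T, hadj0⟩⟩
              rw [if_pos hx0T, if_pos hB0NT]
              linarith [hall T hT]
            · rw [if_neg hx0T]
              by_cases hB0NT : B0 ∈ P.filter (fun B => ∃ x ∈ T, adj x B)
              · rw [if_pos hB0NT]
                have hTTs : T ∈ Ts := by
                  rw [hTs]
                  exact mem_filter.mpr ⟨mem_powerset.mpr hT, hx0T, (mem_filter.mp hB0NT).2⟩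
                have h4 := htight T hTTs
                have h5 : min (w x0) (s B0) = s B0 := min_eq_right (le_of_lt hsm)
                linarith
              · rw [if_neg hB0NT]
                linarith [hall T hT]
          obtain ⟨d', hd0', hdsupp', hddem', hdsup'⟩ := IH S P w' s' hcard hw'0 hs'0 hhall'
          refine ⟨fun x B => d' x B + (if x = x0 ∧ B = B0 then s B0 else 0), ?_, ?_, ?_, ?_⟩
          · intro x B
            have h3 : (0:ℝ) ≤ if x = x0 ∧ B = B0 then s B0 else 0 := by
              split
              · exact le_of_lt hsB0
              · exact le_rfl
            dsimp only
            linarith [hd0' x B]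
          · intro x B h
            dsimp only at h
            by_cases h1' : d' x B ≠ 0
            · exact hdsupp' x B h1'
            push_neg at h1'
            rw [h1', zero_add] at h
            by_cases hx' : x = x0 ∧ B = B0
            · obtain ⟨hxa, hxb⟩ := hx'
              exact ⟨by rw [hxa]; exact hx0, by rw [hxb]; exact hB0P,
                by rw [hxa, hxb]; exact hadj0⟩
            · rw [if_neg hx'] at h; exact (h rfl).elim
          · intro x hx
            rw [Finset.sum_add_distrib]
            by_cases hxx0 : x = x0
            · have e3 : ∑ B ∈ P, (if x = x0 ∧ B = B0 then s B0 else 0) = s B0 := by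
                simp [hxx0, Finset.sum_ite_eq', hB0P]
              rw [e3, hddem' x hx]
              simp only [hw']
              rw [if_pos hxx0, hxx0]
              ring
            · have e3 : ∑ B ∈ P, (if x = x0 ∧ B = B0 then s B0 else 0) = 0 := by
                refine Finset.sum_eq_zero fun B _ => ?_
                simp [hxx0]
              rw [e3, add_zero, hddem' x hx]
              simp only [hw']
              rw [if_neg hxx0]
              ring
          · intro B hB
            rw [Finset.sum_add_distrib]
            have e3 : ∑ x ∈ S, (if x = x0 ∧ B = B0 then s B0 else 0)
                = if B = B0 then s B0 else 0 := by
              by_cases hBB0 : B = B0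
              · simp [hBB0, Finset.sum_ite_eq', hx0]
              · simp [hBB0]
            rw [e3]
            have h6 := hdsup' B hB
            simp only [hs'] at h6
            by_cases hBB0 : B = B0
            · rw [if_pos hBB0]
              rw [if_pos hBB0] at h6
              linarith
            · rw [if_neg hBB0]
              rw [if_neg hBB0] at h6
              linarith

end Gale

lemma carve {Ω : Type*} [MeasurableSpace Ω] (μ : Measure Ω) [IsFiniteMeasure μ]
    (hatomless : ∀ s : Set Ω, MeasurableSet s → ∀ r : ENNReal, r ≤ μ s →
      ∃ t : Set Ω, t ⊆ s ∧ MeasurableSet t ∧ μ t = r)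
    {ι : Type*} [DecidableEq ι] (a : ι → ℝ) (ha : ∀ x, 0 ≤ a x) :
    ∀ (F : Finset ι) (A : Set Ω), MeasurableSet A →
      ENNReal.ofReal (∑ x ∈ F, a x) ≤ μ A →
      ∃ E : ι → Set Ω, (∀ x, MeasurableSet (E x)) ∧ (∀ x, E x ⊆ A) ∧
        (∀ x ∈ F, μ (E x) = ENNReal.ofReal (a x)) ∧
        (∀ x, a x = 0 → E x = ∅) ∧
        (∀ x y, x ≠ y → Disjoint (E x) (E y)) := by
  intro F
  induction F using Finset.induction_on with
  | empty =>
    intro A hA _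
    exact ⟨fun _ => ∅, fun _ => MeasurableSet.empty, fun _ => Set.empty_subset A,
      fun x hx => absurd hx (Finset.notMem_empty x), fun _ _ => rfl,
      fun _ _ _ => by simp⟩
  | @insert x0 F hx0F IHF =>
    intro A hA hle
    have hsumF : 0 ≤ ∑ x ∈ F, a x := Finset.sum_nonneg fun x _ => ha x
    by_cases hz : a x0 = 0
    · have hle' : ENNReal.ofReal (∑ x ∈ F, a x) ≤ μ A := by
        refine le_trans (le_of_eq ?_) hle
        rw [Finset.sum_insert hx0F, hz, zero_add]
      obtain ⟨E, hEm, hEA, hEμ, hEz, hEd⟩ := IHF A hA hle'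
      refine ⟨fun x => if x = x0 then ∅ else E x, ?_, ?_, ?_, ?_, ?_⟩
      · intro x; dsimp only; split <;> [exact MeasurableSet.empty; exact hEm x]
      · intro x; dsimp only; split <;> [exact Set.empty_subset A; exact hEA x]
      · intro x hx
        dsimp only
        rcases Finset.mem_insert.mp hx with h | h
        · rw [if_pos h, h, hz]; simp
        · have hxx0 : x ≠ x0 := fun hc => hx0F (hc ▸ h)
          rw [if_neg hxx0]; exact hEμ x h
      · intro x hx; dsimp only; split <;> [rfl; exact hEz x hx]
      · intro x y hxy
        dsimp only
        by_cases h1 : x = x0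
        · rw [if_pos h1]; simp
        · rw [if_neg h1]
          by_cases h2 : y = x0
          · rw [if_pos h2]; simp
          · rw [if_neg h2]; exact hEd x y hxy
    · have h0 : ENNReal.ofReal (a x0) ≤ μ A := by
        refine le_trans (ENNReal.ofReal_le_ofReal ?_) hle
        rw [Finset.sum_insert hx0F]
        linarith
      obtain ⟨E0, hE0A, hE0m, hE0μ⟩ := hatomless A hA _ h0
      have hE0fin : μ E0 ≠ ⊤ := by rw [hE0μ]; exact ENNReal.ofReal_ne_top
      have hdiff : μ (A \ E0) = μ A - ENNReal.ofReal (a x0) := by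
        rw [measure_diff hE0A hE0m.nullMeasurableSet hE0fin, hE0μ]
      have hsumeq : μ (A \ E0) + μ E0 = μ A := by
        rw [← measure_union disjoint_sdiff_self_left hE0m, Set.diff_union_of_subset hE0A]
      have hle' : ENNReal.ofReal (∑ x ∈ F, a x) ≤ μ (A \ E0) := by
        refine (ENNReal.add_le_add_iff_right hE0fin).mp ?_
        rw [hsumeq, hE0μ, ← ENNReal.ofReal_add hsumF (ha x0)]
        have heq : ∑ x ∈ F, a x + a x0 = ∑ x ∈ insert x0 F, a x := by
          rw [Finset.sum_insert hx0F]; ring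
        rw [heq]; exact hle
      obtain ⟨E, hEm, hEA, hEμ, hEz, hEd⟩ := IHF (A \ E0) (hA.diff hE0m) hle'
      refine ⟨fun x => if x = x0 then E0 else E x, ?_, ?_, ?_, ?_, ?_⟩
      · intro x; dsimp only; split <;> [exact hE0m; exact hEm x]
      · intro x; dsimp only; split
        · exact hE0A
        · exact (hEA x).trans Set.diff_subset
      · intro x hx
        dsimp only
        rcases Finset.mem_insert.mp hx with h | h
        · rw [if_pos h, h]; exact hE0μ
        · have hxx0 : x ≠ x0 := fun hc => hx0F (hc ▸ h)
          rw [if_neg hxx0]; exact hEμ x h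
      · intro x hx
        dsimp only
        have hxx0 : x ≠ x0 := fun hc => hz (hc ▸ hx)
        rw [if_neg hxx0]; exact hEz x hx
      · intro x y hxy
        dsimp only
        by_cases h1 : x = x0
        · rw [if_pos h1]
          have h2 : y ≠ x0 := fun hc => hxy (h1.trans hc.symm)
          rw [if_neg h2]
          exact (disjoint_sdiff_self_right.mono_right (hEA y))
        · rw [if_neg h1]
          by_cases h2 : y = x0
          · rw [if_pos h2]
            exact (disjoint_sdiff_self_left.mono_left (hEA x))
          · rw [if_neg h2]; exact hEd x y hxy

lemma disjointify {Ω : Type*} [MeasurableSpace Ω] (μ : Measure Ω) {S : Type*} [Fintype S]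
    (D : S → Set Ω) (hDm : ∀ x, MeasurableSet (D x))
    (hDae : ∀ x y : S, x ≠ y → μ (D x ∩ D y) = 0) :
    ∃ D' : S → Set Ω, (∀ x, MeasurableSet (D' x)) ∧ (∀ x, D' x ⊆ D x) ∧
      (∀ x, μ (D' x) = μ (D x)) ∧ (∀ x y : S, x ≠ y → Disjoint (D' x) (D' y)) := by
  classical
  letI : LinearOrder S := LinearOrder.lift' (Fintype.equivFin S) (Equiv.injective _)
  set D' : S → Set Ω := fun x => D x \ ⋃ y ∈ Finset.univ.filter (fun y => y < x), D y
    with hD'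
  have hsub : ∀ x, D' x ⊆ D x := fun x => Set.diff_subset
  refine ⟨D', ?_, hsub, ?_, ?_⟩
  · intro x
    exact (hDm x).diff (Finset.measurableSet_biUnion _ fun y _ => hDm y)
  · intro x
    set U := ⋃ y ∈ Finset.univ.filter (fun y => y < x), D y with hU
    have hnull : μ (D x ∩ U) = 0 := by
      have hss : D x ∩ U ⊆ ⋃ y ∈ Finset.univ.filter (fun y => y < x), (D x ∩ D y) := by
        rintro ω ⟨h1, h2⟩
        simp only [hU, Set.mem_iUnion, exists_prop] at h2 ⊢
        obtain ⟨y, hy, hω⟩ := h2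
        exact ⟨y, hy, h1, hω⟩
      refine le_antisymm (le_trans (measure_mono hss) ?_) (zero_le)
      refine le_trans (measure_biUnion_finset_le _ _) ?_
      refine le_of_eq (Finset.sum_eq_zero fun y hy => ?_)
      have hyx : y < x := (Finset.mem_filter.mp hy).2
      exact hDae x y (ne_of_lt hyx).symm
    have hident : D' x = D x \ (D x ∩ U) := by
      rw [hD']
      simp only
      rw [Set.diff_self_inter]
    rw [hident]
    exact measure_diff_null hnull
  · intro x y hxy
    rcases lt_or_gt_of_ne hxy with h | h
    · refine Set.disjoint_left.mpr fun ω hωx hωy => ?_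
      have h2 := hωy.2
      simp only [Set.mem_iUnion, exists_prop] at h2
      exact h2 ⟨x, by simp [h], hsub x hωx⟩
    · refine Set.disjoint_left.mpr fun ω hωx hωy => ?_
      have h2 := hωx.2
      simp only [Set.mem_iUnion, exists_prop] at h2
      exact h2 ⟨y, by simp [h], hsub y hωy⟩

/-- A probabilistic version of the Hall Marriage Theorem.  Let `(Ω, F, μ)` be an atomless
probability space (every event contains events of every smaller measure), `S` a finite set,
and for each `x ∈ S` a weight `w x ≥ 0` and an event `C x`.  Then `μ(C_T) ≥ W_T` for every
`T ⊆ S` if and only if there is a family of (a.e.) pairwise disjoint events `D x ⊆ C x`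
with `μ(D x) = w x`; moreover if `W_S = 1` then any such family is a partition of `Ω` up
to null measure. -/
theorem probability_hall {Ω : Type*} [MeasurableSpace Ω] (μ : Measure Ω)
    [IsProbabilityMeasure μ]
    (hatomless : ∀ s : Set Ω, MeasurableSet s → ∀ r : ENNReal, r ≤ μ s →
      ∃ t : Set Ω, t ⊆ s ∧ MeasurableSet t ∧ μ t = r)
    {S : Type*} [Fintype S] (w : S → ℝ) (hw : ∀ x, 0 ≤ w x)
    (C : S → Set Ω) (hC : ∀ x, MeasurableSet (C x)) :
    ((∀ T : Finset S, ENNReal.ofReal (∑ x ∈ T, w x) ≤ μ (⋃ x ∈ T, C x)) ↔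
      ∃ D : S → Set Ω, (∀ x, MeasurableSet (D x)) ∧ (∀ x, D x ⊆ C x) ∧
        (∀ x, μ (D x) = ENNReal.ofReal (w x)) ∧
        ∀ x y : S, x ≠ y → μ (D x ∩ D y) = 0) ∧
    ((∑ x : S, w x) = 1 →
      ∀ D : S → Set Ω, (∀ x, MeasurableSet (D x)) → (∀ x, D x ⊆ C x) →
        (∀ x, μ (D x) = ENNReal.ofReal (w x)) →
        (∀ x y : S, x ≠ y → μ (D x ∩ D y) = 0) →
        μ (⋃ x : S, D x) = 1) := by
  classical
  constructor
  · constructor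
    · -- hard direction
      intro hHall
      -- the atoms of the algebra generated by the C x
      set A : Finset S → Set Ω :=
        fun B => (⋂ x ∈ B, C x) ∩ (⋂ x ∈ (Bᶜ : Finset S), (C x)ᶜ) with hA
      have hAm : ∀ B, MeasurableSet (A B) := by
        intro B
        refine MeasurableSet.inter ?_ ?_
        · exact MeasurableSet.biInter (B.countable_toSet) fun x _ => hC x
        · exact MeasurableSet.biInter ((Bᶜ : Finset S).countable_toSet)
            fun x _ => (hC x).compl
      have hmemA : ∀ (ω : Ω) (B : Finset S), ω ∈ A B ↔ ∀ x : S, x ∈ B ↔ ω ∈ C x := by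
        intro ω B
        rw [hA]
        simp only [Set.mem_inter_iff, Set.mem_iInter, Finset.mem_compl, Set.mem_compl_iff]
        constructor
        · rintro ⟨h1, h2⟩ x
          refine ⟨fun hx => h1 x hx, fun hc => ?_⟩
          by_contra hb
          exact h2 x hb hc
        · intro h
          exact ⟨fun x hx => (h x).mp hx, fun x hx hc => hx ((h x).mpr hc)⟩
      have hAdis : ∀ B B' : Finset S, B ≠ B' → Disjoint (A B) (A B') := by
        intro B B' hne
        refine Set.disjoint_left.mpr fun ω h h' => ?_
        refine hne ?_
        ext x
        rw [hmemA] at h h'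
        exact (h x).trans (h' x).symm
      have hAcup : ∀ T : Finset S, (⋃ x ∈ T, C x)
          = ⋃ B ∈ Finset.univ.filter (fun B : Finset S => ∃ x ∈ T, x ∈ B), A B := by
        intro T
        ext ω
        simp only [Set.mem_iUnion, Finset.mem_filter, Finset.mem_univ, true_and,
          exists_prop]
        constructor
        · rintro ⟨x, hxT, hx⟩
          refine ⟨Finset.univ.filter (fun x => ω ∈ C x), ⟨x, hxT, by simp [hx]⟩, ?_⟩
          rw [hmemA]
          intro y
          simp
        · rintro ⟨B, ⟨x, hxT, hxB⟩, hωB⟩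
          exact ⟨x, hxT, ((hmemA ω B).mp hωB x).mp hxB⟩
      have hAsum : ∀ T : Finset S, μ (⋃ x ∈ T, C x)
          = ∑ B ∈ Finset.univ.filter (fun B : Finset S => ∃ x ∈ T, x ∈ B), μ (A B) := by
        intro T
        rw [hAcup T]
        exact measure_biUnion_finset (fun B _ B' _ hne => hAdis B B' hne)
          (fun B _ => hAm B)
      -- the finite flow problem
      have hgalehall : ∀ T : Finset S, T ⊆ Finset.univ → ∑ x ∈ T, w x ≤
          ∑ B ∈ (Finset.univ : Finset (Finset S)).filter
            (fun B => ∃ x ∈ T, (fun (x : S) (B : Finset S) => x ∈ B) x B),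
            (μ (A B)).toReal := by
        intro T _
        have h := hHall T
        rw [hAsum T] at h
        calc ∑ x ∈ T, w x
            = (ENNReal.ofReal (∑ x ∈ T, w x)).toReal := by
              rw [ENNReal.toReal_ofReal (Finset.sum_nonneg fun x _ => hw x)]
          _ ≤ (∑ B ∈ Finset.univ.filter (fun B : Finset S => ∃ x ∈ T, x ∈ B),
                μ (A B)).toReal := by
              refine ENNReal.toReal_mono ?_ h
              exact (ENNReal.sum_lt_top.mpr fun B _ => measure_lt_top μ _).ne
          _ = ∑ B ∈ Finset.univ.filter (fun B : Finset S => ∃ x ∈ T, x ∈ B),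
                (μ (A B)).toReal :=
              ENNReal.toReal_sum fun B _ => (measure_lt_top μ _).ne
      obtain ⟨d, hd0, hdsupp, hddem, hdsup⟩ := gale (fun (x : S) (B : Finset S) => x ∈ B)
        (Fintype.card S + ((Finset.univ : Finset (Finset S)).filter
          fun B => 0 < (μ (A B)).toReal).card)
        Finset.univ Finset.univ w (fun B => (μ (A B)).toReal)
        (le_of_eq (by rw [Finset.card_univ])) hw (fun B => ENNReal.toReal_nonneg)
        hgalehall
      -- carve each atom
      have hsup : ∀ B : Finset S,
          ENNReal.ofReal (∑ x ∈ Finset.univ, d x B) ≤ μ (A B) := fun B =>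
        ENNReal.ofReal_le_of_le_toReal (hdsup B (Finset.mem_univ B))
      have hcarve : ∀ B : Finset S, ∃ E : S → Set Ω,
          (∀ x, MeasurableSet (E x)) ∧ (∀ x, E x ⊆ A B) ∧
          (∀ x ∈ Finset.univ, μ (E x) = ENNReal.ofReal (d x B)) ∧
          (∀ x, d x B = 0 → E x = ∅) ∧
          (∀ x y, x ≠ y → Disjoint (E x) (E y)) := fun B =>
        carve μ hatomless (fun x => d x B) (fun x => hd0 x B) Finset.univ (A B)
          (hAm B) (hsup B)
      choose E hEm hEA hEμ hEz hEd using hcarve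
      refine ⟨fun x => ⋃ B : Finset S, E B x, ?_, ?_, ?_, ?_⟩
      · intro x
        exact MeasurableSet.iUnion fun B => hEm B x
      · intro x
        refine Set.iUnion_subset fun B => ?_
        by_cases hxB : x ∈ B
        · refine (hEA B x).trans fun ω hω => ?_
          exact ((hmemA ω B).mp hω x).mp hxB
        · have hd : d x B = 0 := by
            by_contra h
            exact hxB (hdsupp x B h).2.2
          rw [hEz B x hd]
          exact Set.empty_subset _
      · intro x
        dsimp only
        have hun : (⋃ B : Finset S, E B x)
            = ⋃ B ∈ (Finset.univ : Finset (Finset S)), E B x := by simp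
        rw [hun, measure_biUnion_finset
          (fun B _ B' _ hne => (hAdis B B' hne).mono (hEA B x) (hEA B' x))
          (fun B _ => hEm B x)]
        have : ∀ B ∈ (Finset.univ : Finset (Finset S)),
            μ (E B x) = ENNReal.ofReal (d x B) := fun B _ => hEμ B x (Finset.mem_univ x)
        rw [Finset.sum_congr rfl this, ← ENNReal.ofReal_sum_of_nonneg
          (fun B _ => hd0 x B), hddem x (Finset.mem_univ x)]
      · intro x y hxy
        have hdisj : Disjoint (⋃ B : Finset S, E B x) (⋃ B : Finset S, E B y) := by
          rw [Set.disjoint_iUnion_left]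
          intro B
          rw [Set.disjoint_iUnion_right]
          intro B'
          rcases eq_or_ne B' B with rfl | hne
          · exact hEd B' x y hxy
          · exact (hAdis B B' hne.symm).mono (hEA B x) (hEA B' y)
        rw [Set.disjoint_iff_inter_eq_empty.mp hdisj, measure_empty]
    · -- easy direction
      rintro ⟨D, hDm, hDC, hDμ, hDae⟩ T
      obtain ⟨D', hD'm, hD'sub, hD'μ, hD'd⟩ := disjointify μ D hDm hDae
      have h1 : ENNReal.ofReal (∑ x ∈ T, w x) = ∑ x ∈ T, μ (D' x) := by
        rw [ENNReal.ofReal_sum_of_nonneg (fun x _ => hw x)]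
        exact Finset.sum_congr rfl fun x _ => by rw [hD'μ x, hDμ x]
      rw [h1, ← measure_biUnion_finset (fun x _ y _ hne => hD'd x y hne)
        (fun x _ => hD'm x)]
      exact measure_mono (Set.iUnion₂_mono fun x _ => (hD'sub x).trans (hDC x))
  · -- the partition statement
    intro hsum1 D hDm hDC hDμ hDae
    obtain ⟨D', hD'm, hD'sub, hD'μ, hD'd⟩ := disjointify μ D hDm hDae
    refine le_antisymm prob_le_one ?_
    have h1 : (1 : ENNReal) = ∑ x ∈ Finset.univ, μ (D' x) := by
      have : ∀ x ∈ Finset.univ, μ (D' x) = ENNReal.ofReal (w x) := fun x _ => by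
        rw [hD'μ x, hDμ x]
      rw [Finset.sum_congr rfl this, ← ENNReal.ofReal_sum_of_nonneg (fun x _ => hw x),
        hsum1]
      simp
    rw [h1, ← measure_biUnion_finset (fun x _ y _ hne => hD'd x y hne)
      (fun x _ => hD'm x)]
    refine measure_mono ?_
    refine Set.iUnion₂_subset fun x _ => ?_
    exact (hD'sub x).trans (Set.subset_iUnion D x)

end Stmt18
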